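/- Let p be a prime, let q₁, q₂ be nonzero elements of ℤ/pℤ with q₁ ≠ q₂, and let h ∈ ℤ/pℤ. Then the map S : (ℤ/pℤ)² → (ℤ/pℤ)² given by S(x,y) = (q₁⁻¹·y + h, q₂·x + (1 − q₂·q₁⁻¹)·y − q₂·h) makes (ℤ/pℤ, S) an indecomposable nondegenerate braided set. -/

import Mathlib

/-- `S₁ = S × id` acting on the first two factors of `X × X × X`. -/
def braidL {X : Type*} (S : X × X → X × X) : X × X × X → X × X × X :=
  fun t => ((S (t.1, t.2.1)).1, (S (t.1, t.2.1)).2, t.2.2)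

/-- `S₂ = id × S` acting on the last two factors of `X × X × X`. -/
def braidR {X : Type*} (S : X × X → X × X) : X × X × X → X × X × X :=
  fun t => (t.1, S (t.2.1, t.2.2))

/-- A braided set: `S` is a bijection satisfying `S₁S₂S₁ = S₂S₁S₂`. -/
def IsBraidedSet {X : Type*} (S : X × X → X × X) : Prop :=
  Function.Bijective S ∧
    braidL S ∘ braidR S ∘ braidL S = braidR S ∘ braidL S ∘ braidR S

/-- Nondegeneracy: writing `S (x, y) = (g_x y, f_y x)`, each `g_x` and each `f_y`
is a bijection. -/
def Nondegenerate {X : Type*} (S : X × X → X × X) : Prop :=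
  (∀ x, Function.Bijective fun y => (S (x, y)).1) ∧
    (∀ y, Function.Bijective fun x => (S (x, y)).2)

/-- Decomposability of a solution. -/
def Decomposable {X : Type*} (S : X × X → X × X) : Prop :=
  ∃ X₁ X₂ : Set X, X₁.Nonempty ∧ X₂.Nonempty ∧ Disjoint X₁ X₂ ∧ X₁ ∪ X₂ = Set.univ ∧
    (∀ x ∈ X₁, ∀ y ∈ X₁, (S (x, y)).1 ∈ X₁ ∧ (S (x, y)).2 ∈ X₁) ∧
    (∀ x ∈ X₂, ∀ y ∈ X₂, (S (x, y)).1 ∈ X₂ ∧ (S (x, y)).2 ∈ X₂)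

/-- Indecomposability of a solution. -/
def Indecomposable {X : Type*} (S : X × X → X × X) : Prop := ¬ Decomposable S

lemma zmod_translate_univ {p : ℕ} (hp : p.Prime) {X : Set (ZMod p)} {d : ZMod p}
    (hd : d ≠ 0) (hX : ∀ z ∈ X, z + d ∈ X) (hne : X.Nonempty) : X = Set.univ := by
  haveI := Fact.mk hp
  obtain ⟨x₀, hx₀⟩ := hne
  have key : ∀ n : ℕ, x₀ + (n : ZMod p) * d ∈ X := by
    intro n
    induction n with
    | zero => simpa using hx₀
    | succ n ih =>
      have := hX _ ih
      push_cast
      rw [add_mul, one_mul, ← add_assoc]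
      exact this
  ext z
  simp only [Set.mem_univ, iff_true]
  have hn : ((((z - x₀) * d⁻¹).val : ℕ) : ZMod p) = (z - x₀) * d⁻¹ := by
    simp [ZMod.natCast_val, ZMod.cast_id]
  have := key ((z - x₀) * d⁻¹).val
  rw [hn] at this
  have hz : x₀ + (z - x₀) * d⁻¹ * d = z := by field_simp; ring
  rwa [hz] at this

-- surjectivity on an invariant finite set
lemma exists_preimage {p : ℕ} [NeZero p] {X : Set (ZMod p)} {T : ZMod p → ZMod p}
    (hT : Function.Injective T) (hm : Set.MapsTo T X X) {z : ZMod p} (hz : z ∈ X) :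
    ∃ t ∈ X, T t = z := by
  have : Set.SurjOn T X X :=
    ((Set.Finite.injOn_iff_bijOn_of_mapsTo (Set.toFinite X) hm).mp
      (Set.injOn_of_injective hT)).surjOn
  obtain ⟨t, ht, htz⟩ := this hz
  exact ⟨t, ht, htz⟩

/-- Theorem 2.9(1)(ii): the affine map
`S(x,y) = (q₁⁻¹ y + h, q₂ x + (1 - q₂ q₁⁻¹) y - q₂ h)` is an indecomposable
nondegenerate braided set on `ℤ/pℤ`. -/
theorem affine_solution_type_ii
    {p : ℕ} (hp : p.Prime) (q₁ q₂ h : ZMod p) (hq₁ : q₁ ≠ 0) (hq₂ : q₂ ≠ 0)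
    (hne : q₁ ≠ q₂) :
    IsBraidedSet (fun xy : ZMod p × ZMod p =>
        (q₁⁻¹ * xy.2 + h, q₂ * xy.1 + (1 - q₂ * q₁⁻¹) * xy.2 - q₂ * h)) ∧
    Nondegenerate (fun xy : ZMod p × ZMod p =>
        (q₁⁻¹ * xy.2 + h, q₂ * xy.1 + (1 - q₂ * q₁⁻¹) * xy.2 - q₂ * h)) ∧
    Indecomposable (fun xy : ZMod p × ZMod p =>
        (q₁⁻¹ * xy.2 + h, q₂ * xy.1 + (1 - q₂ * q₁⁻¹) * xy.2 - q₂ * h)) := by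
  haveI := Fact.mk hp
  refine ⟨⟨?_, ?_⟩, ⟨?_, ?_⟩, ?_⟩
  · -- bijectivity of S
    rw [Function.bijective_iff_has_inverse]
    refine ⟨fun uv => (q₂⁻¹ * (uv.2 + q₂ * h - (1 - q₂ * q₁⁻¹) * (q₁ * (uv.1 - h))),
      q₁ * (uv.1 - h)), fun xy => ?_, fun uv => ?_⟩
    · obtain ⟨x, y⟩ := xy
      simp only [Prod.mk.injEq]
      constructor
      · field_simp
        ring
      · field_simp
        ring
    · obtain ⟨u, v⟩ := uv
      simp only [Prod.mk.injEq]
      constructor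
      · field_simp; ring
      · field_simp
        ring
  · -- braid relation
    funext t
    obtain ⟨x, y, z⟩ := t
    simp only [braidL, braidR, Function.comp_apply, Prod.mk.injEq]
    refine ⟨by trivial, by field_simp; ring, by field_simp; ring⟩
  · -- nondegeneracy: g
    intro x
    rw [Function.bijective_iff_has_inverse]
    refine ⟨fun y => q₁ * (y - h), fun y => by field_simp; ring, fun y => by field_simp; ring⟩
  · -- nondegeneracy: f
    intro y
    rw [Function.bijective_iff_has_inverse]
    refine ⟨fun x => q₂⁻¹ * (x - ((1 - q₂ * q₁⁻¹) * y - q₂ * h)),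
      fun x => by field_simp; ring, fun x => by field_simp; ring⟩
  · -- indecomposability
    haveI := Fact.mk hp
    haveI : NeZero p := ⟨hp.pos.ne'⟩
    -- dispatch p = 2
    rcases eq_or_ne p 2 with hp2 | hp2
    · exfalso; subst hp2; revert hq₁ hq₂ hne; revert q₁ q₂; decide
    have hb : (1 : ZMod p) - q₂ * q₁⁻¹ ≠ 0 := by
      intro hb0
      apply hne
      have : q₂ * q₁⁻¹ = 1 := by linear_combination -hb0
      field_simp at this
      exact this.symm
    rintro ⟨X₁, X₂, ⟨y₁, hy₁⟩, ⟨y₂, hy₂⟩, hdisj, huniv, hc₁, hc₂⟩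
    have hmem : ∀ z : ZMod p, z ∈ X₁ ∨ z ∈ X₂ := by
      intro z
      have : z ∈ X₁ ∪ X₂ := huniv ▸ Set.mem_univ z
      exact this
    have hnot : ∀ z : ZMod p, z ∈ X₁ → z ∈ X₂ → False := fun z h1 h2 =>
      Set.disjoint_left.mp hdisj h1 h2
    have hy12 : y₁ ≠ y₂ := fun e => hnot y₁ hy₁ (e ▸ hy₂)
    -- A preserves X₁ and X₂
    have hA₁ : ∀ y ∈ X₁, q₁⁻¹ * y + h ∈ X₁ := fun y hy => (hc₁ y₁ hy₁ y hy).1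
    have hA₂ : ∀ y ∈ X₂, q₁⁻¹ * y + h ∈ X₂ := fun y hy => (hc₂ y₂ hy₂ y hy).1
    -- A⁻¹ preserves X₁ (complement argument)
    have hAinv₁ : ∀ z ∈ X₁, q₁ * (z - h) ∈ X₁ := by
      intro z hz
      rcases hmem (q₁ * (z - h)) with hm | hm
      · exact hm
      · exfalso
        have := hA₂ _ hm
        have he : q₁⁻¹ * (q₁ * (z - h)) + h = z := by field_simp; ring
        rw [he] at this
        exact hnot z hz this
    -- B w preserves X₁ for w ∈ X₁, with preimages
    have hB₁ : ∀ w ∈ X₁, ∀ x ∈ X₁, q₂ * x + (1 - q₂ * q₁⁻¹) * w - q₂ * h ∈ X₁ := by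
      intro w hw x hx; exact (hc₁ x hx w hw).2
    have hB₂ : ∀ w ∈ X₂, ∀ x ∈ X₂, q₂ * x + (1 - q₂ * q₁⁻¹) * w - q₂ * h ∈ X₂ := by
      intro w hw x hx; exact (hc₂ x hx w hw).2
    have hBpre : ∀ (X : Set (ZMod p)) (w : ZMod p),
        (∀ x ∈ X, q₂ * x + (1 - q₂ * q₁⁻¹) * w - q₂ * h ∈ X) →
        ∀ z ∈ X, ∃ t ∈ X, q₂ * t + (1 - q₂ * q₁⁻¹) * w - q₂ * h = z := by
      intro X w hX z hz
      apply exists_preimage (T := fun t => q₂ * t + (1 - q₂ * q₁⁻¹) * w - q₂ * h) ?_ hX hz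
      intro a b hab
      simp only at hab
      have : q₂ * a = q₂ * b := by linear_combination hab
      exact mul_left_cancel₀ hq₂ this
    by_cases hq1 : q₁ = 1
    · -- q₁ = 1
      subst hq1
      simp only [inv_one, one_mul, mul_one] at *
      by_cases hh : h = 0
      · subst hh
        simp only [mul_zero, sub_zero, add_zero] at *
        have hq2one : q₂ ≠ 1 := fun e => hne e.symm
        have hsub : ∀ (X : Set (ZMod p)) (w₀ v : ZMod p), w₀ ∈ X → v ∉ X →
            (∀ w ∈ X, ∀ x ∈ X, q₂ * x + (1 - q₂) * w ∈ X) → X ⊆ {w₀} := by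
          intro X w₀ v hw₀ hv hBX w hw
          by_contra hwne
          have hwne' : w₀ - w ≠ 0 :=
            sub_ne_zero.mpr fun e => hwne (Set.mem_singleton_iff.mpr e.symm)
          have htr : ∀ z ∈ X, z + (1 - q₂) * (w₀ - w) ∈ X := by
            intro z hz
            obtain ⟨t, ht, htz⟩ := hBpre X w (fun x hx => hBX w hw x hx) z hz
            have := hBX w₀ hw₀ t ht
            have he : q₂ * t + (1 - q₂) * w₀ = z + (1 - q₂) * (w₀ - w) := by
              linear_combination htz
            rwa [he] at this
          have : X = Set.univ := zmod_translate_univ hp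
            (mul_ne_zero (sub_ne_zero.mpr fun e => hq2one e.symm) hwne') htr ⟨w₀, hw₀⟩
          exact hv (this ▸ Set.mem_univ v)
        have hs₁ : X₁ ⊆ {y₁} :=
          hsub X₁ y₁ y₂ hy₁ (fun hy => hnot y₂ hy hy₂) (fun w hw x hx => hB₁ w hw x hx)
        have hs₂ : X₂ ⊆ {y₂} :=
          hsub X₂ y₂ y₁ hy₂ (fun hy => hnot y₁ hy₁ hy) (fun w hw x hx => hB₂ w hw x hx)
        have hU : (Set.univ : Set (ZMod p)) ⊆ {y₁, y₂} := by
          rw [← huniv]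
          rintro z (hz | hz)
          · exact Or.inl (hs₁ hz)
          · exact Or.inr (hs₂ hz)
        have hple : p ≤ 2 := by
          calc p = Nat.card (ZMod p) := (Nat.card_zmod p).symm
            _ = (Set.univ : Set (ZMod p)).ncard := (Set.ncard_univ _).symm
            _ ≤ ({y₁, y₂} : Set (ZMod p)).ncard := Set.ncard_le_ncard hU (Set.toFinite _)
            _ ≤ 2 := (Set.ncard_insert_le _ _).trans (by simp)
        have := hp.two_le
        omega
      · -- h ≠ 0 : X₁ closed under translation by h
        have htr : ∀ z ∈ X₁, z + h ∈ X₁ := fun z hz => hA₁ z hz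
        have : X₁ = Set.univ := zmod_translate_univ hp hh htr ⟨y₁, hy₁⟩
        exact hnot y₂ (this ▸ Set.mem_univ y₂) hy₂
    · -- q₁ ≠ 1
      have hinv : q₁⁻¹ * q₁ = 1 := inv_mul_cancel₀ hq₁
      have hq1inv : q₁⁻¹ - 1 ≠ 0 := by
        intro e
        exact hq1 (by rw [← inv_inv q₁, sub_eq_zero.mp e, inv_one])
      set d : ZMod p → ZMod p :=
        fun w => ((1 - q₂ * q₁⁻¹) * w - q₂ * h) * (q₁⁻¹ - 1) + h * (1 - q₂) with hd
      have main : ∀ (X : Set (ZMod p)) (w : ZMod p), w ∈ X →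
          (∀ y ∈ X, q₁⁻¹ * y + h ∈ X) → (∀ z ∈ X, q₁ * (z - h) ∈ X) →
          (∀ x ∈ X, q₂ * x + (1 - q₂ * q₁⁻¹) * w - q₂ * h ∈ X) →
          ∀ z ∈ X, z + -(d w) ∈ X := by
        intro X w hw hA hAinv hBX z hz
        obtain ⟨t, ht, htz⟩ := hBpre X w hBX (q₁ * (z - h)) (hAinv z hz)
        have hmem' := hBX _ (hA t ht)
        have he : q₂ * (q₁⁻¹ * t + h) + (1 - q₂ * q₁⁻¹) * w - q₂ * h = z + -(d w) := by
          rw [hd]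
          linear_combination q₁⁻¹ * htz + (z - h) * hinv
        rwa [he] at hmem'
      have hAinv₂ : ∀ z ∈ X₂, q₁ * (z - h) ∈ X₂ := by
        intro z hz
        rcases hmem (q₁ * (z - h)) with hm | hm
        · exfalso
          have := hA₁ _ hm
          have he : q₁⁻¹ * (q₁ * (z - h)) + h = z := by field_simp; ring
          rw [he] at this
          exact hnot z this hz
        · exact hm
      have hd1 : d y₁ = 0 := by
        by_contra hd0
        have : X₁ = Set.univ :=
          zmod_translate_univ hp (neg_ne_zero.mpr hd0)
            (main X₁ y₁ hy₁ hA₁ hAinv₁ (hB₁ y₁ hy₁)) ⟨y₁, hy₁⟩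
        exact hnot y₂ (this ▸ Set.mem_univ y₂) hy₂
      have hd2 : d y₂ = 0 := by
        by_contra hd0
        have : X₂ = Set.univ :=
          zmod_translate_univ hp (neg_ne_zero.mpr hd0)
            (main X₂ y₂ hy₂ hA₂ hAinv₂ (hB₂ y₂ hy₂)) ⟨y₂, hy₂⟩
        exact hnot y₁ hy₁ (this ▸ Set.mem_univ y₁)
      have : (1 - q₂ * q₁⁻¹) * (q₁⁻¹ - 1) * (y₁ - y₂) = 0 := by
        rw [hd] at hd1 hd2
        linear_combination hd1 - hd2
      rcases mul_eq_zero.mp this with h0 | h0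
      · rcases mul_eq_zero.mp h0 with h1 | h1
        · exact hb h1
        · exact hq1inv h1
      · exact hy12 (sub_eq_zero.mp h0)
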